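/- Let γ > 1 and let two ideal-MHD states satisfy ρ_L,ρ_R,p_L,p_R > 0, ρ_L ≠ ρ_R and β_L ≠ β_R where β = ρ/(2p). Let 𝓗 be the discrete entropy Jacobian matrix built from these two states, let q = (ρ, ρu, ρv, ρw, E, B₁, B₂, B₃) with E = p/(γ−1) + ½ρ(u²+v²+w²) + ½(B₁²+B₂²+B₃²) denote the conservative variables, and let v denote the entropy variables. Then for every component index i ∈ {1,2,3,4,6,7,8} one has (𝓗 ⟦v⟧)_i = ⟦q⟧_i (equality holds exactly in every component except the total energy, i = 5). -/

import Mathlib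

open Matrix

noncomputable section

/-- Arithmetic mean of a pair of states. -/
def am (x y : ℝ) : ℝ := (x + y) / 2

/-- Logarithmic mean of a pair of (positive, distinct) states. -/
noncomputable def lnM (x y : ℝ) : ℝ := (x - y) / (Real.log x - Real.log y)

theorem vec8_zero {α : Type*} (a b c d e f g h : α) : ![a,b,c,d,e,f,g,h] (0:Fin 8) = a := rfl
theorem vec8_zero' {α : Type*} (a b c d e f g h : α) : ![a,b,c,d,e,f,g,h] (⟨0, by omega⟩:Fin 8) = a := rfl
theorem vec8_one {α : Type*} (a b c d e f g h : α) : ![a,b,c,d,e,f,g,h] (1:Fin 8) = b := rfl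
theorem vec8_one' {α : Type*} (a b c d e f g h : α) : ![a,b,c,d,e,f,g,h] (⟨1, by omega⟩:Fin 8) = b := rfl
theorem vec8_two {α : Type*} (a b c d e f g h : α) : ![a,b,c,d,e,f,g,h] (2:Fin 8) = c := rfl
theorem vec8_two' {α : Type*} (a b c d e f g h : α) : ![a,b,c,d,e,f,g,h] (⟨2, by omega⟩:Fin 8) = c := rfl
theorem vec8_three {α : Type*} (a b c d e f g h : α) : ![a,b,c,d,e,f,g,h] (3:Fin 8) = d := rfl
theorem vec8_three' {α : Type*} (a b c d e f g h : α) : ![a,b,c,d,e,f,g,h] (⟨3, by omega⟩:Fin 8) = d := rfl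
theorem vec8_four {α : Type*} (a b c d e f g h : α) : ![a,b,c,d,e,f,g,h] (4:Fin 8) = e := rfl
theorem vec8_four' {α : Type*} (a b c d e f g h : α) : ![a,b,c,d,e,f,g,h] (⟨4, by omega⟩:Fin 8) = e := rfl
theorem vec8_five {α : Type*} (a b c d e f g h : α) : ![a,b,c,d,e,f,g,h] (5:Fin 8) = f := rfl
theorem vec8_five' {α : Type*} (a b c d e f g h : α) : ![a,b,c,d,e,f,g,h] (⟨5, by omega⟩:Fin 8) = f := rfl
theorem vec8_six {α : Type*} (a b c d e f g h : α) : ![a,b,c,d,e,f,g,h] (6:Fin 8) = g := rfl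
theorem vec8_six' {α : Type*} (a b c d e f g h : α) : ![a,b,c,d,e,f,g,h] (⟨6, by omega⟩:Fin 8) = g := rfl
theorem vec8_seven {α : Type*} (a b c d e f g h : α) : ![a,b,c,d,e,f,g,h] (7:Fin 8) = h := rfl
theorem vec8_seven' {α : Type*} (a b c d e f g h : α) : ![a,b,c,d,e,f,g,h] (⟨7, by omega⟩:Fin 8) = h := rfl

/-- the discrete entropy Jacobian 𝓗 maps the jump of the entropy
variables to the jump of the conservative variables in every component except the
total energy (the fifth component, index 4). -/
theorem discrete_entropy_jacobian_jump_identity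
    (γ ρL uL vL wL pL B1L B2L B3L ρR uR vR wR pR B1R B2R B3R : ℝ)
    (hγ : 1 < γ) (hρL : 0 < ρL) (hρR : 0 < ρR) (hpL : 0 < pL) (hpR : 0 < pR)
    (hρ : ρL ≠ ρR) (hβ : ρL / (2 * pL) ≠ ρR / (2 * pR)) :
    let βL := ρL / (2 * pL)
    let βR := ρR / (2 * pR)
    let sL := Real.log pL - γ * Real.log ρL
    let sR := Real.log pR - γ * Real.log ρR
    let vL8 : Fin 8 → ℝ :=
      ![(γ - sL) / (γ - 1) - βL * (uL ^ 2 + vL ^ 2 + wL ^ 2), 2 * βL * uL, 2 * βL * vL,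
        2 * βL * wL, -(2 * βL), 2 * βL * B1L, 2 * βL * B2L, 2 * βL * B3L]
    let vR8 : Fin 8 → ℝ :=
      ![(γ - sR) / (γ - 1) - βR * (uR ^ 2 + vR ^ 2 + wR ^ 2), 2 * βR * uR, 2 * βR * vR,
        2 * βR * wR, -(2 * βR), 2 * βR * B1R, 2 * βR * B2R, 2 * βR * B3R]
    let EL := pL / (γ - 1) + ρL * (uL ^ 2 + vL ^ 2 + wL ^ 2) / 2
        + (B1L ^ 2 + B2L ^ 2 + B3L ^ 2) / 2
    let ER := pR / (γ - 1) + ρR * (uR ^ 2 + vR ^ 2 + wR ^ 2) / 2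
        + (B1R ^ 2 + B2R ^ 2 + B3R ^ 2) / 2
    let jq : Fin 8 → ℝ :=
      ![ρR - ρL, ρR * uR - ρL * uL, ρR * vR - ρL * vL, ρR * wR - ρL * wL, ER - EL,
        B1R - B1L, B2R - B2L, B3R - B3L]
    let ρln := lnM ρL ρR
    let βln := lnM βL βR
    let pln := ρln / (2 * βln)
    let au := am uL uR
    let av := am vL vR
    let aw := am wL wR
    let aρ := am ρL ρR
    let aβ := am βL βR
    let aB1 := am B1L B1R
    let aB2 := am B2L B2R
    let aB3 := am B3L B3R
    let ub2 := 2 * (au ^ 2 + av ^ 2 + aw ^ 2)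
        - (am (uL ^ 2) (uR ^ 2) + am (vL ^ 2) (vR ^ 2) + am (wL ^ 2) (wR ^ 2))
    let Ebar := pln / (γ - 1) + ρln * ub2 / 2
    let pbar := aρ / (2 * aβ)
    let τ := 1 / (2 * aβ)
    let H55 := (1 / ρln) * (pln ^ 2 / (γ - 1) + Ebar ^ 2)
        + pbar * (au ^ 2 + av ^ 2 + aw ^ 2) + τ * (aB1 ^ 2 + aB2 ^ 2 + aB3 ^ 2)
    let Hd : Matrix (Fin 8) (Fin 8) ℝ := Matrix.of
      ![![ρln, ρln * au, ρln * av, ρln * aw, Ebar, 0, 0, 0],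
        ![ρln * au, ρln * au ^ 2 + pbar, ρln * au * av, ρln * au * aw, (Ebar + pbar) * au, 0, 0, 0],
        ![ρln * av, ρln * au * av, ρln * av ^ 2 + pbar, ρln * av * aw, (Ebar + pbar) * av, 0, 0, 0],
        ![ρln * aw, ρln * au * aw, ρln * av * aw, ρln * aw ^ 2 + pbar, (Ebar + pbar) * aw, 0, 0, 0],
        ![Ebar, (Ebar + pbar) * au, (Ebar + pbar) * av, (Ebar + pbar) * aw, H55,
          τ * aB1, τ * aB2, τ * aB3],
        ![0, 0, 0, 0, τ * aB1, τ, 0, 0],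
        ![0, 0, 0, 0, τ * aB2, 0, τ, 0],
        ![0, 0, 0, 0, τ * aB3, 0, 0, τ]]
    ∀ i : Fin 8, i ≠ 4 → Hd.mulVec (fun j => vR8 j - vL8 j) i = jq i := by
  intro βL βR sL sR vL8 vR8 EL ER jq ρln βln pln au av aw aρ aβ aB1 aB2 aB3 ub2
    Ebar pbar τ H55 Hd i hi
  have hg : γ - 1 ≠ 0 := sub_ne_zero.2 (ne_of_gt hγ)
  have hβLpos : 0 < βL := div_pos hρL (by positivity)
  have hβRpos : 0 < βR := div_pos hρR (by positivity)
  have hlogρ : Real.log ρL ≠ Real.log ρR := fun h =>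
    hρ (by rw [← Real.exp_log hρL, h, Real.exp_log hρR])
  have hlogβ : Real.log βL ≠ Real.log βR := fun h =>
    hβ (by rw [show ρL / (2*pL) = βL from rfl, show ρR / (2*pR) = βR from rfl,
      ← Real.exp_log hβLpos, h, Real.exp_log hβRpos])
  have hρln : ρln * (Real.log ρL - Real.log ρR) = ρL - ρR :=
    div_mul_cancel₀ _ (sub_ne_zero.2 hlogρ)
  have hβln : βln * (Real.log βL - Real.log βR) = βL - βR :=
    div_mul_cancel₀ _ (sub_ne_zero.2 hlogβ)
  have hβln_ne : βln ≠ 0 :=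
    div_ne_zero (sub_ne_zero.2 hβ) (sub_ne_zero.2 hlogβ)
  have eβL : Real.log βL = Real.log ρL - Real.log 2 - Real.log pL := by
    rw [show βL = ρL / (2*pL) from rfl,
      Real.log_div (ne_of_gt hρL) (by positivity),
      Real.log_mul two_ne_zero (ne_of_gt hpL)]; ring
  have eβR : Real.log βR = Real.log ρR - Real.log 2 - Real.log pR := by
    rw [show βR = ρR / (2*pR) from rfl,
      Real.log_div (ne_of_gt hρR) (by positivity),
      Real.log_mul two_ne_zero (ne_of_gt hpR)]; ring
  have h1 : 2 * pln * (βL - βR) = ρln * (Real.log βL - Real.log βR) := by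
    rw [← hβln]; show 2 * (ρln / (2 * βln)) * _ = _
    field_simp
  have key : (ρln * (sL - sR) + 2 * pln * (βL - βR)) / (γ - 1) = ρR - ρL := by
    rw [h1, eβL, eβR, show sL = Real.log pL - γ * Real.log ρL from rfl,
      show sR = Real.log pR - γ * Real.log ρR from rfl]
    field_simp
    linear_combination (1 - γ) * hρln
  have haβ : (0:ℝ) < aβ := by
    show 0 < (βL + βR) / 2; positivity
  have e2 : (2:ℝ) * aβ = βL + βR := by show 2 * ((βL + βR) / 2) = _; ring
  have h2 : pbar * (βL + βR) = (ρL + ρR) / 2 := by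
    have e : pbar * (2 * aβ) = aρ := div_mul_cancel₀ _ (by positivity)
    rw [← e2, e]; rfl
  have h3 : τ * (βL + βR) = 1 := by
    have e : τ * (2 * aβ) = 1 := div_mul_cancel₀ _ (by positivity)
    rw [← e2, e]
  fin_cases i
  · simp only [Hd, jq, vL8, vR8, Matrix.mulVec, dotProduct, Fin.sum_univ_eight,
      Matrix.of_apply, vec8_zero, vec8_zero', vec8_one, vec8_one', vec8_two, vec8_two', vec8_three, vec8_three', vec8_four, vec8_four', vec8_five, vec8_five', vec8_six, vec8_six', vec8_seven, vec8_seven']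
    simp only [Ebar, ub2, au, av, aw, am]
    linear_combination key
  · simp only [Hd, jq, vL8, vR8, Matrix.mulVec, dotProduct, Fin.sum_univ_eight,
      Matrix.of_apply, vec8_zero, vec8_zero', vec8_one, vec8_one', vec8_two, vec8_two', vec8_three, vec8_three', vec8_four, vec8_four', vec8_five, vec8_five', vec8_six, vec8_six', vec8_seven, vec8_seven']
    simp only [Ebar, ub2, au, av, aw, am]
    linear_combination ((uL + uR) / 2) * key + (uR - uL) * h2
  · simp only [Hd, jq, vL8, vR8, Matrix.mulVec, dotProduct, Fin.sum_univ_eight,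
      Matrix.of_apply, vec8_zero, vec8_zero', vec8_one, vec8_one', vec8_two, vec8_two', vec8_three, vec8_three', vec8_four, vec8_four', vec8_five, vec8_five', vec8_six, vec8_six', vec8_seven, vec8_seven']
    simp only [Ebar, ub2, au, av, aw, am]
    linear_combination ((vL + vR) / 2) * key + (vR - vL) * h2
  · simp only [Hd, jq, vL8, vR8, Matrix.mulVec, dotProduct, Fin.sum_univ_eight,
      Matrix.of_apply, vec8_zero, vec8_zero', vec8_one, vec8_one', vec8_two, vec8_two', vec8_three, vec8_three', vec8_four, vec8_four', vec8_five, vec8_five', vec8_six, vec8_six', vec8_seven, vec8_seven']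
    simp only [Ebar, ub2, au, av, aw, am]
    linear_combination ((wL + wR) / 2) * key + (wR - wL) * h2
  · exact absurd rfl hi
  · simp only [Hd, jq, vL8, vR8, Matrix.mulVec, dotProduct, Fin.sum_univ_eight,
      Matrix.of_apply, vec8_zero, vec8_zero', vec8_one, vec8_one', vec8_two, vec8_two', vec8_three, vec8_three', vec8_four, vec8_four', vec8_five, vec8_five', vec8_six, vec8_six', vec8_seven, vec8_seven']
    simp only [aB1, am]
    linear_combination (B1R - B1L) * h3
  · simp only [Hd, jq, vL8, vR8, Matrix.mulVec, dotProduct, Fin.sum_univ_eight,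
      Matrix.of_apply, vec8_zero, vec8_zero', vec8_one, vec8_one', vec8_two, vec8_two', vec8_three, vec8_three', vec8_four, vec8_four', vec8_five, vec8_five', vec8_six, vec8_six', vec8_seven, vec8_seven']
    simp only [aB2, am]
    linear_combination (B2R - B2L) * h3
  · simp only [Hd, jq, vL8, vR8, Matrix.mulVec, dotProduct, Fin.sum_univ_eight,
      Matrix.of_apply, vec8_zero, vec8_zero', vec8_one, vec8_one', vec8_two, vec8_two', vec8_three, vec8_three', vec8_four, vec8_four', vec8_five, vec8_five', vec8_six, vec8_six', vec8_seven, vec8_seven']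
    simp only [aB3, am]
    linear_combination (B3R - B3L) * h3

end
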